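/- arXiv:2007.13908 — 2 statements merged into one kernel-verified Lean document; each statement's English description precedes it below -/
import Mathlib

section
/- Let h(x,y) = |x − y| on ℝ×ℝ and let I_L = (0,L) for L > 0. Then ⨍_{I_L}⨍_{I_L} |h(x,y) − (h_x)_{I_L} − (h_y)_{I_L} + h_{I_L×I_L}| dx dy = πL/18. Consequently, since this tends to ∞ as L → ∞, h ∉ BMO_{rec,ℛ}(ℝ×ℝ), where ℛ is the basis of open axis-parallel rectangles (products of finite open intervals) in ℝ². -/
open MeasureTheory Set ENNReal

noncomputable section

/-- The rectangular mean oscillation of `f : ℝ × ℝ → ℝ` over `S₁ × S₂`. -/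
def recOsc (f : ℝ × ℝ → ℝ) (S₁ S₂ : Set ℝ) : ℝ :=
  ⨍ x in S₁, ⨍ y in S₂,
    |f (x, y) - (⨍ y' in S₂, f (x, y')) - (⨍ x' in S₁, f (x', y)) + ⨍ z in S₁ ×ˢ S₂, f z|

/-- The rectangular BMO norm of `f` with respect to the bases `𝒮x, 𝒮y` of shapes in `ℝ`. -/
def recBmoNorm (𝒮x 𝒮y : Set (Set ℝ)) (f : ℝ × ℝ → ℝ) : ℝ≥0∞ :=
  ⨆ S₁ ∈ 𝒮x, ⨆ S₂ ∈ 𝒮y, ENNReal.ofReal (recOsc f S₁ S₂)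

/-- The basis of finite open intervals in `ℝ`. -/
def intervalBasis : Set (Set ℝ) := {S | ∃ a b : ℝ, a < b ∧ S = Ioo a b}

set_option maxHeartbeats 1000000

section Aux
open intervalIntegral

lemma key_integral (r : ℝ) (hr : 0 < r) :
    ∫ x in (0:ℝ)..r, Real.sqrt (r^2 - x^2) ^ 3 = 3 * Real.pi * r^4 / 16 := by
  set F : ℝ → ℝ := fun x => x * Real.sqrt (r^2 - x^2) ^ 3 / 4
      + 3*r^2/8 * (x * Real.sqrt (r^2 - x^2)) + 3*r^4/8 * Real.arcsin (x/r) with hF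
  have hcont : ContinuousOn F (Icc 0 r) := by
    apply Continuous.continuousOn
    have h1 : Continuous fun x : ℝ => Real.sqrt (r^2 - x^2) := by fun_prop
    have h2 : Continuous fun x : ℝ => Real.arcsin (x/r) :=
      Real.continuous_arcsin.comp (by fun_prop)
    fun_prop
  have hderiv : ∀ x ∈ Ioo (0:ℝ) r, HasDerivAt F (Real.sqrt (r^2 - x^2) ^ 3) x := by
    intro x hx
    obtain ⟨hx0, hxr⟩ := hx
    have hpos : 0 < r^2 - x^2 := by nlinarith
    set s := Real.sqrt (r^2 - x^2) with hs
    have hs2 : s^2 = r^2 - x^2 := Real.sq_sqrt hpos.le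
    have hspos : 0 < s := Real.sqrt_pos.2 hpos
    have hsd : HasDerivAt (fun x : ℝ => Real.sqrt (r^2 - x^2)) (-x/s) x := by
      have h1 : HasDerivAt (fun x : ℝ => r^2 - x^2) (-(2*x)) x := by
        simpa using ((hasDerivAt_pow 2 x).const_sub (r^2))
      have := (Real.hasDerivAt_sqrt hpos.ne').comp x h1
      refine this.congr_deriv ?_
      field_simp [hs]
      ring
    have harc : HasDerivAt (fun x : ℝ => Real.arcsin (x/r)) (1/s) x := by
      have hxy : x / r ≠ -1 := by
        have : 0 < x / r := div_pos hx0 hr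
        linarith
      have hxy1 : x / r ≠ 1 := by
        have : x / r < 1 := (div_lt_one hr).2 hxr
        linarith
      have h1 : HasDerivAt (fun x : ℝ => x / r) (1/r) x := by
        simpa using (hasDerivAt_id x).div_const r
      have := (Real.hasDerivAt_arcsin hxy hxy1).comp x h1
      refine this.congr_deriv ?_
      have hss : Real.sqrt (1 - (x/r)^2) = s / r := by
        rw [hs, show (1 : ℝ) - (x/r)^2 = (r^2-x^2)/r^2 by field_simp]
        rw [Real.sqrt_div hpos.le, Real.sqrt_sq hr.le]
      rw [hss]
      field_simp
    -- combine
    have hcube : HasDerivAt (fun x : ℝ => Real.sqrt (r^2 - x^2) ^ 3)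
        (3 * s^2 * (-x/s)) x := by
      simpa [Function.comp_def] using (hasDerivAt_pow 3 s).comp x hsd
    have h1 : HasDerivAt (fun x : ℝ => x * Real.sqrt (r^2 - x^2) ^ 3 / 4)
        ((Real.sqrt (r^2-x^2)^3 + x * (3 * s^2 * (-x/s)))/4) x := by
      simpa using ((hasDerivAt_id x).mul hcube).div_const 4
    have h2 : HasDerivAt (fun x : ℝ => 3*r^2/8 * (x * Real.sqrt (r^2 - x^2)))
        (3*r^2/8 * (Real.sqrt (r^2-x^2) + x * (-x/s))) x := by
      simpa using ((hasDerivAt_id x).mul hsd).const_mul (3*r^2/8)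
    have h3 : HasDerivAt (fun x : ℝ => 3*r^4/8 * Real.arcsin (x/r))
        (3*r^4/8 * (1/s)) x := harc.const_mul (3*r^4/8)
    have := (h1.add h2).add h3
    refine this.congr_deriv ?_
    rw [← hs]
    rw [show r^4 = (s^2+x^2)^2 by nlinarith, show r^2 = s^2+x^2 by nlinarith]
    field_simp
    ring
  have := integral_eq_sub_of_hasDeriv_right_of_le hr.le hcont
    (fun x hx => (hderiv x hx).hasDerivWithinAt)
    ((by fun_prop : Continuous fun x : ℝ => Real.sqrt (r^2-x^2)^3).intervalIntegrable 0 r)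
  rw [this, hF]
  simp [Real.sqrt_eq_zero', div_self hr.ne', Real.arcsin_one]
  ring

lemma pos_part_integral (A c : ℝ) (hc : 0 ≤ c) (h : max A 0 ≤ c^2) :
    ∫ y in (0:ℝ)..c, max (A - y^2) 0 = 2/3 * Real.sqrt (max A 0) ^ 3 := by
  rcases le_or_gt A 0 with hA | hA
  · rw [max_eq_right hA, Real.sqrt_zero]
    rw [intervalIntegral.integral_congr (g := fun _ => (0:ℝ)) ?_]
    · simp
    · intro y hy
      rw [uIcc_of_le hc] at hy
      have : A - y^2 ≤ 0 := by nlinarith [hy.1]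
      simp [max_eq_right this]
  · set a := Real.sqrt A with ha
    have ha2 : a^2 = A := Real.sq_sqrt hA.le
    have hac : a ≤ c := by
      rw [max_eq_left hA.le] at h
      calc a = Real.sqrt A := rfl
        _ ≤ Real.sqrt (c^2) := Real.sqrt_le_sqrt h
        _ = c := Real.sqrt_sq hc
    have ha0 : 0 ≤ a := Real.sqrt_nonneg A
    rw [max_eq_left hA.le, ← ha]
    rw [← intervalIntegral.integral_add_adjacent_intervals (a := (0:ℝ)) (b := a) (c := c)
      (by apply Continuous.intervalIntegrable; fun_prop)
      (by apply Continuous.intervalIntegrable; fun_prop)]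
    have e1 : ∫ y in (0:ℝ)..a, max (A - y^2) 0 = ∫ y in (0:ℝ)..a, (A - y^2) := by
      apply intervalIntegral.integral_congr
      intro y hy
      rw [uIcc_of_le ha0] at hy
      have : 0 ≤ A - y^2 := by nlinarith [hy.1, hy.2]
      simp [max_eq_left this]
    have e2 : ∫ y in a..c, max (A - y^2) 0 = 0 := by
      rw [intervalIntegral.integral_congr (g := fun _ => (0:ℝ)) ?_]
      · simp
      · intro y hy
        rw [uIcc_of_le hac] at hy
        have : A - y^2 ≤ 0 := by nlinarith [hy.1]
        simp [max_eq_right this]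
    rw [e1, e2, intervalIntegral.integral_sub (by apply Continuous.intervalIntegrable; fun_prop)
      (by apply Continuous.intervalIntegrable; fun_prop)]
    simp [integral_pow]
    nlinarith [ha2]

lemma abs_xy_integral (L x : ℝ) (hx : x ∈ Icc (0:ℝ) L) :
    ∫ y in (0:ℝ)..L, |x - y| = (x^2 + (L-x)^2)/2 := by
  obtain ⟨hx0, hxL⟩ := hx
  rw [← intervalIntegral.integral_add_adjacent_intervals (a := (0:ℝ)) (b := x) (c := L)
    (by apply Continuous.intervalIntegrable; fun_prop)
    (by apply Continuous.intervalIntegrable; fun_prop)]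
  have e1 : ∫ y in (0:ℝ)..x, |x - y| = ∫ y in (0:ℝ)..x, (x - y) := by
    apply intervalIntegral.integral_congr
    intro y hy
    rw [uIcc_of_le hx0] at hy
    show |x - y| = x - y
    rw [abs_of_nonneg (by linarith [hy.2])]
  have e2 : ∫ y in x..L, |x - y| = ∫ y in x..L, (y - x) := by
    apply intervalIntegral.integral_congr
    intro y hy
    rw [uIcc_of_le hxL] at hy
    show |x - y| = y - x
    rw [abs_of_nonpos (by linarith [hy.1]), neg_sub]
  rw [e1, e2]
  rw [intervalIntegral.integral_sub (by apply Continuous.intervalIntegrable; fun_prop)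
      (by apply Continuous.intervalIntegrable; fun_prop),
    intervalIntegral.integral_sub (by apply Continuous.intervalIntegrable; fun_prop)
      (by apply Continuous.intervalIntegrable; fun_prop)]
  simp [integral_id]
  ring

lemma max_div_aux (L t : ℝ) (hL : 0 < L) : max (t/L) 0 = 1/L * max t 0 := by
  rcases le_total t 0 with h|h
  · rw [max_eq_right h, max_eq_right (div_nonpos_of_nonpos_of_nonneg h hL.le)]; ring
  · rw [max_eq_left h, max_eq_left (div_nonneg h hL.le)]; ring

lemma poly_int (a b c L : ℝ) :
    ∫ y in (0:ℝ)..L, (a + b*y + c*y^2) = a*L + b*L^2/2 + c*L^3/3 := by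
  rw [intervalIntegral.integral_add (by apply Continuous.intervalIntegrable; fun_prop)
      (by apply Continuous.intervalIntegrable; fun_prop),
    intervalIntegral.integral_add (by apply Continuous.intervalIntegrable; fun_prop)
      (by apply Continuous.intervalIntegrable; fun_prop),
    intervalIntegral.integral_const, intervalIntegral.integral_const_mul,
    intervalIntegral.integral_const_mul, integral_id, integral_pow]
  push_cast
  simp [smul_eq_mul]
  ring

lemma inner_q_integral (L x : ℝ) (hL : 0 < L) (hx : x ∈ Icc (0:ℝ) L) :
    ∫ y in (0:ℝ)..L, max (|x - y| - (x^2+y^2)/L + x + y - 2*L/3) 0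
      = 2/(3*L) * (Real.sqrt (max (L^2/3 - (L-x)^2) 0) ^ 3
          + Real.sqrt (max (L^2/3 - x^2) 0) ^ 3) := by
  obtain ⟨hx0, hxL⟩ := hx
  rw [← intervalIntegral.integral_add_adjacent_intervals (a := (0:ℝ)) (b := x) (c := L)
    (by apply Continuous.intervalIntegrable; fun_prop)
    (by apply Continuous.intervalIntegrable; fun_prop)]
  have e1 : ∫ y in (0:ℝ)..x, max (|x - y| - (x^2+y^2)/L + x + y - 2*L/3) 0
      = ∫ y in (0:ℝ)..x, (1/L) * max ((L^2/3 - (L-x)^2) - y^2) 0 := by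
    apply intervalIntegral.integral_congr
    intro y hy
    rw [uIcc_of_le hx0] at hy
    show max (|x - y| - (x^2+y^2)/L + x + y - 2*L/3) 0 = _
    rw [abs_of_nonneg (by linarith [hy.2])]
    have : x - y - (x^2+y^2)/L + x + y - 2*L/3 = ((L^2/3 - (L-x)^2) - y^2) / L := by
      field_simp; ring
    rw [this, max_div_aux L _ hL]
  have e2 : ∫ y in x..L, max (|x - y| - (x^2+y^2)/L + x + y - 2*L/3) 0
      = ∫ y in x..L, (1/L) * max ((L^2/3 - x^2) - (L-y)^2) 0 := by
    apply intervalIntegral.integral_congr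
    intro y hy
    rw [uIcc_of_le hxL] at hy
    show max (|x - y| - (x^2+y^2)/L + x + y - 2*L/3) 0 = _
    rw [abs_of_nonpos (by linarith [hy.1]), neg_sub]
    have : y - x - (x^2+y^2)/L + x + y - 2*L/3 = ((L^2/3 - x^2) - (L-y)^2) / L := by
      field_simp; ring
    rw [this, max_div_aux L _ hL]
  rw [e1, e2]
  rw [intervalIntegral.integral_const_mul, intervalIntegral.integral_const_mul]
  have p1 : ∫ y in (0:ℝ)..x, max ((L^2/3 - (L-x)^2) - y^2) 0
      = 2/3 * Real.sqrt (max (L^2/3 - (L-x)^2) 0) ^ 3 := by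
    apply pos_part_integral _ _ hx0
    rcases le_or_gt (L^2/3 - (L-x)^2) 0 with h | h
    · rw [max_eq_right h]; positivity
    · rw [max_eq_left h.le]; nlinarith
  have p2 : ∫ y in x..L, max ((L^2/3 - x^2) - (L-y)^2) 0
      = 2/3 * Real.sqrt (max (L^2/3 - x^2) 0) ^ 3 := by
    have := intervalIntegral.integral_comp_sub_left
      (a := x) (b := L) (fun u => max ((L^2/3 - x^2) - u^2) 0) L
    simp only [sub_self] at this
    rw [this]
    apply pos_part_integral _ _ (by linarith)
    rcases le_or_gt (L^2/3 - x^2) 0 with h | h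
    · rw [max_eq_right h]; positivity
    · rw [max_eq_left h.le]; nlinarith
  rw [p1, p2]
  field_simp

lemma inner_abs (L x : ℝ) (hL : 0 < L) (hx : x ∈ Icc (0:ℝ) L) :
    ∫ y in (0:ℝ)..L, |(|x - y| - (x^2+y^2)/L + x + y - 2*L/3)|
      = 4/(3*L) * (Real.sqrt (max (L^2/3 - (L-x)^2) 0) ^ 3
          + Real.sqrt (max (L^2/3 - x^2) 0) ^ 3) := by
  have habs : ∀ t : ℝ, |t| = 2 * max t 0 - t := by
    intro t
    rcases le_total t 0 with h|h
    · rw [abs_of_nonpos h, max_eq_right h]; ring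
    · rw [abs_of_nonneg h, max_eq_left h]; ring
  have e : ∫ y in (0:ℝ)..L, |(|x - y| - (x^2+y^2)/L + x + y - 2*L/3)|
      = ∫ y in (0:ℝ)..L, (2 * max (|x - y| - (x^2+y^2)/L + x + y - 2*L/3) 0
          - (|x - y| - (x^2+y^2)/L + x + y - 2*L/3)) := by
    apply intervalIntegral.integral_congr
    intro y _
    exact habs _
  rw [e, intervalIntegral.integral_sub ?_ ?_, intervalIntegral.integral_const_mul,
    inner_q_integral L x hL hx]
  · have hq0 : ∫ y in (0:ℝ)..L, (|x - y| - (x^2+y^2)/L + x + y - 2*L/3) = 0 := by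
      have e2 : ∫ y in (0:ℝ)..L, (|x - y| - (x^2+y^2)/L + x + y - 2*L/3)
          = ∫ y in (0:ℝ)..L, (|x - y| + ((x - x^2/L - 2*L/3) + 1*y + (-(1/L))*y^2)) := by
        apply intervalIntegral.integral_congr
        intro y _
        show |x - y| - (x^2+y^2)/L + x + y - 2*L/3 = _
        field_simp
        ring
      rw [e2, intervalIntegral.integral_add (by apply Continuous.intervalIntegrable; fun_prop)
        (by apply Continuous.intervalIntegrable; fun_prop), abs_xy_integral L x hx, poly_int]
      field_simp
      ring
    rw [hq0]
    ring
  · apply Continuous.intervalIntegrable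
    have h0 : Continuous fun y : ℝ => |x - y| - (x^2+y^2)/L + x + y - 2*L/3 := by fun_prop
    exact continuous_const.mul (h0.max continuous_const)
  · apply Continuous.intervalIntegrable
    fun_prop

lemma outer_integral (L : ℝ) (hL : 0 < L) :
    ∫ x in (0:ℝ)..L, Real.sqrt (max (L^2/3 - x^2) 0) ^ 3 = Real.pi * L^4 / 48 := by
  set r := L / Real.sqrt 3 with hr
  have h3 : (0:ℝ) < Real.sqrt 3 := Real.sqrt_pos.2 (by norm_num)
  have hrpos : 0 < r := div_pos hL h3
  have hr2 : r^2 = L^2/3 := by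
    rw [hr, div_pow, Real.sq_sqrt (by norm_num : (3:ℝ) ≥ 0)]
  have hrL : r < L := by
    rw [hr, div_lt_iff₀ h3]
    nlinarith [Real.sq_sqrt (by norm_num : (3:ℝ) ≥ 0), Real.sqrt_nonneg 3]
  rw [← intervalIntegral.integral_add_adjacent_intervals (a := (0:ℝ)) (b := r) (c := L)
    (by apply Continuous.intervalIntegrable; fun_prop)
    (by apply Continuous.intervalIntegrable; fun_prop)]
  have e1 : ∫ x in (0:ℝ)..r, Real.sqrt (max (L^2/3 - x^2) 0) ^ 3
      = ∫ x in (0:ℝ)..r, Real.sqrt (r^2 - x^2) ^ 3 := by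
    apply intervalIntegral.integral_congr
    intro x hx
    rw [uIcc_of_le hrpos.le] at hx
    show Real.sqrt (max (L^2/3 - x^2) 0) ^ 3 = _
    rw [← hr2, max_eq_left (by nlinarith [hx.1, hx.2])]
  have e2 : ∫ x in r..L, Real.sqrt (max (L^2/3 - x^2) 0) ^ 3 = 0 := by
    rw [intervalIntegral.integral_congr (g := fun _ => (0:ℝ)) ?_]
    · simp
    · intro x hx
      rw [uIcc_of_le hrL.le] at hx
      show Real.sqrt (max (L^2/3 - x^2) 0) ^ 3 = 0
      rw [max_eq_right (by nlinarith [hx.1, hr2]), Real.sqrt_zero]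
      ring
  rw [e1, e2, key_integral r hrpos, add_zero, show r^4 = (r^2)^2 by ring, hr2]
  ring

lemma recOsc_value (L : ℝ) (hL : 0 < L) :
    recOsc (fun z => |z.1 - z.2|) (Ioo 0 L) (Ioo 0 L) = Real.pi * L / 18 := by
  have hvol : (volume (Ioo (0:ℝ) L)).toReal = L := by
    simp [Real.volume_Ioo, hL.le]
  have hIoo : ∀ g : ℝ → ℝ, ∫ y in Ioo (0:ℝ) L, g y = ∫ y in (0:ℝ)..L, g y := by
    intro g
    rw [intervalIntegral.integral_of_le hL.le, integral_Ioc_eq_integral_Ioo]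
  -- the average over the product set
  have hm : (⨍ z in (Ioo (0:ℝ) L) ×ˢ (Ioo (0:ℝ) L), |z.1 - z.2|) = L/3 := by
    rw [setAverage_eq, smul_eq_mul]
    have hvol2 : (volume ((Ioo (0:ℝ) L) ×ˢ (Ioo (0:ℝ) L))).toReal = L * L := by
      rw [Measure.volume_eq_prod, Measure.prod_prod]
      simp [Real.volume_Ioo, hL.le, ENNReal.toReal_mul]
    have hint : IntegrableOn (fun z : ℝ × ℝ => |z.1 - z.2|)
        ((Ioo (0:ℝ) L) ×ˢ (Ioo (0:ℝ) L)) volume := by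
      have h1 : IntegrableOn (fun z : ℝ × ℝ => |z.1 - z.2|)
          ((Icc (0:ℝ) L) ×ˢ (Icc (0:ℝ) L)) volume :=
        ContinuousOn.integrableOn_compact (isCompact_Icc.prod isCompact_Icc)
          ((by fun_prop : Continuous fun z : ℝ × ℝ => |z.1 - z.2|).continuousOn)
      exact h1.mono_set (Set.prod_mono Ioo_subset_Icc_self Ioo_subset_Icc_self)
    have hprod : ∫ z in (Ioo (0:ℝ) L) ×ˢ (Ioo (0:ℝ) L), |z.1 - z.2|
        = ∫ x in Ioo (0:ℝ) L, ∫ y in Ioo (0:ℝ) L, |x - y| := by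
      rw [Measure.volume_eq_prod]
      rw [setIntegral_prod _ (by rw [← Measure.volume_eq_prod]; exact hint)]
    rw [measureReal_def, hvol2, hprod]
    have : ∫ x in Ioo (0:ℝ) L, ∫ y in Ioo (0:ℝ) L, |x - y|
        = ∫ x in Ioo (0:ℝ) L, (L^2/2 + (-L)*x + 1*x^2) := by
      apply setIntegral_congr_fun measurableSet_Ioo
      intro x hx
      dsimp only
      rw [hIoo, abs_xy_integral L x (Ioo_subset_Icc_self hx)]
      ring
    rw [this, hIoo, poly_int]
    field_simp
    ring
  -- averages of slices
  have hA : ∀ x ∈ Ioo (0:ℝ) L, (⨍ y' in Ioo (0:ℝ) L, |x - y'|) = (x^2+(L-x)^2)/(2*L) := by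
    intro x hx
    rw [setAverage_eq, smul_eq_mul, measureReal_def, hvol, hIoo, abs_xy_integral L x (Ioo_subset_Icc_self hx),
      inv_mul_eq_div, div_div]
  have hA' : ∀ y ∈ Ioo (0:ℝ) L, (⨍ x' in Ioo (0:ℝ) L, |x' - y|) = (y^2+(L-y)^2)/(2*L) := by
    intro y hy
    have : (⨍ x' in Ioo (0:ℝ) L, |x' - y|) = ⨍ x' in Ioo (0:ℝ) L, |y - x'| := by
      apply average_congr
      filter_upwards with x'
      rw [abs_sub_comm]
    rw [this, setAverage_eq, smul_eq_mul, measureReal_def, hvol, hIoo, abs_xy_integral L y (Ioo_subset_Icc_self hy),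
      inv_mul_eq_div, div_div]
  rw [recOsc]
  simp only
  rw [setAverage_eq, smul_eq_mul, measureReal_def, hvol]
  rw [setIntegral_congr_fun measurableSet_Ioo
    (g := fun x => (L⁻¹ * (4/(3*L))) * (Real.sqrt (max (L^2/3 - (L-x)^2) 0) ^ 3
          + Real.sqrt (max (L^2/3 - x^2) 0) ^ 3)) ?_]
  · rw [hIoo, intervalIntegral.integral_const_mul,
      intervalIntegral.integral_add (by apply Continuous.intervalIntegrable; fun_prop)
        (by apply Continuous.intervalIntegrable; fun_prop)]
    have hrefl : ∫ x in (0:ℝ)..L, Real.sqrt (max (L^2/3 - (L-x)^2) 0) ^ 3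
        = ∫ x in (0:ℝ)..L, Real.sqrt (max (L^2/3 - x^2) 0) ^ 3 := by
      have := intervalIntegral.integral_comp_sub_left (a := (0:ℝ)) (b := L)
        (fun u => Real.sqrt (max (L^2/3 - u^2) 0) ^ 3) L
      simpa using this
    rw [hrefl, outer_integral L hL]
    field_simp
    ring
  · intro x hx
    dsimp only
    rw [setAverage_eq, smul_eq_mul, measureReal_def, hvol]
    rw [setIntegral_congr_fun measurableSet_Ioo
      (g := fun y => |(|x - y| - (x^2+y^2)/L + x + y - 2*L/3)|) ?_]
    · rw [hIoo, inner_abs L x hL (Ioo_subset_Icc_self hx)]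
      ring
    · intro y hy
      dsimp only
      rw [hA x hx, hA' y hy, hm]
      congr 1
      field_simp
      ring

end Aux

/-- For `h(x,y) = |x − y|` and `I_L = (0,L)`, the rectangular mean
oscillation of `h` over `I_L × I_L` equals `πL/18`; consequently, since it tends to `∞` as
`L → ∞`, `h ∉ BMO_{rec,ℛ}(ℝ×ℝ)` where `ℛ` is the basis of axis-parallel rectangles. -/
theorem abs_x_sub_y_not_rec_bmo :
    (∀ L : ℝ, 0 < L →
      recOsc (fun z => |z.1 - z.2|) (Ioo 0 L) (Ioo 0 L) = Real.pi * L / 18) ∧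
    recBmoNorm intervalBasis intervalBasis (fun z => |z.1 - z.2|) = ⊤ := by
  refine ⟨fun L hL => recOsc_value L hL, ?_⟩
  set f : ℝ × ℝ → ℝ := fun z => |z.1 - z.2| with hf
  have hle : ∀ L : ℝ, 0 < L →
      ENNReal.ofReal (Real.pi * L / 18) ≤ recBmoNorm intervalBasis intervalBasis f := by
    intro L hL
    have hmem : Ioo (0:ℝ) L ∈ intervalBasis := ⟨0, L, hL, rfl⟩
    rw [← recOsc_value L hL]
    calc ENNReal.ofReal (recOsc f (Ioo 0 L) (Ioo 0 L))
        ≤ ⨆ S₂ ∈ intervalBasis, ENNReal.ofReal (recOsc f (Ioo 0 L) S₂) :=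
          le_biSup (fun S₂ => ENNReal.ofReal (recOsc f (Ioo 0 L) S₂)) hmem
      _ ≤ recBmoNorm intervalBasis intervalBasis f :=
          le_biSup (fun S₁ => ⨆ S₂ ∈ intervalBasis, ENNReal.ofReal (recOsc f S₁ S₂)) hmem
  by_contra hne
  obtain ⟨n, hn⟩ := ENNReal.exists_nat_gt hne
  have hpi : (0:ℝ) < Real.pi := Real.pi_pos
  set L : ℝ := 18 * (n + 1) / Real.pi with hLdef
  have hLpos : 0 < L := by positivity
  have hval : Real.pi * L / 18 = (n:ℝ) + 1 := by
    rw [hLdef]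
    field_simp
  have h1 : ENNReal.ofReal ((n:ℝ) + 1) ≤ recBmoNorm intervalBasis intervalBasis f := by
    rw [← hval]; exact hle L hLpos
  have h2 : (n : ℝ≥0∞) ≤ ENNReal.ofReal ((n:ℝ) + 1) := by
    rw [← ENNReal.ofReal_natCast n]
    exact ENNReal.ofReal_le_ofReal (by linarith)
  exact absurd (h2.trans h1) (not_le.2 hn)
end
end

section
/- Let f(x,y) = −log|x − y| on ℝ², regarded as a function on ℝ×ℝ, and let ℛ be the basis of open axis-parallel rectangles in ℝ². Then ‖f‖_{BLO_{rec,ℛ}} ≥ 2 log 2 − 1; in fact, for the rectangle (0,1)×(1,2) one has ⨍_{(0,1)}⨍_{(1,2)} [f(x,y) − max(essinf_{y∈(1,2)} f(x,y), essinf_{x∈(0,1)} f(x,y))] dy dx ≥ 2 log 2 − 1. -/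
open MeasureTheory Set ENNReal

noncomputable section

/-- The rectangular lower oscillation of `f : ℝ × ℝ → ℝ` over `I × J`:
`⨍_I ⨍_J [f(x,y) − max (essinf_J f_x, essinf_I f_y)]`. -/
def recBloOsc (f : ℝ × ℝ → ℝ) (I J : Set ℝ) : ℝ :=
  ⨍ x in I, ⨍ y in J,
    (f (x, y) - max (essInf (fun y' => f (x, y')) (volume.restrict J))
      (essInf (fun x' => f (x', y)) (volume.restrict I)))

/-- The rectangular BLO norm of `f` with respect to the basis `ℛ` of rectangles `I × J`. -/
def recBloNorm (f : ℝ × ℝ → ℝ) : ℝ≥0∞ :=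
  ⨆ I ∈ intervalBasis, ⨆ J ∈ intervalBasis, ENNReal.ofReal (recBloOsc f I J)

namespace NegLogBloAux

open Filter Real intervalIntegral

lemma essInf_restrict_Ioo_eq (a b : ℝ) (hab : a < b) (g : ℝ → ℝ) (m : ℝ)
    (h1 : ∀ y ∈ Ioo a b, m ≤ g y)
    (h2 : ∀ c, m < c → ∃ u v, a ≤ u ∧ u < v ∧ v ≤ b ∧ ∀ y ∈ Ioo u v, g y ≤ c) :
    essInf g (volume.restrict (Ioo a b)) = m := by
  set μ := volume.restrict (Ioo a b) with hμdef
  have hμ : μ ≠ 0 := by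
    rw [hμdef, Ne, Measure.restrict_eq_zero, Real.volume_Ioo]
    simp [sub_pos.2 hab, (ENNReal.ofReal_pos.2 (sub_pos.2 hab)).ne']
  haveI : (ae μ).NeBot := ae_neBot.2 hμ
  have hae : ∀ᵐ y ∂μ, m ≤ g y :=
    (ae_restrict_iff' measurableSet_Ioo).2 (ae_of_all _ h1)
  have hbdd : IsBoundedUnder (· ≥ ·) (ae μ) g := ⟨m, eventually_map.2 hae⟩
  have hfreq : ∀ c, m < c → ∃ᶠ y in ae μ, g y ≤ c := by
    intro c hc
    obtain ⟨u, v, hau, huv, hvb, hgc⟩ := h2 c hc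
    rw [frequently_ae_iff]
    intro H
    have hsub : Ioo u v ⊆ {y | g y ≤ c} ∩ Ioo a b := by
      intro y hy
      have hy' : y ∈ Ioo a b := ⟨lt_of_le_of_lt hau hy.1, lt_of_lt_of_le hy.2 hvb⟩
      exact ⟨hgc y hy, hy'⟩
    have : volume (Ioo u v) = 0 := by
      refine measure_mono_null hsub ?_
      rw [← Measure.restrict_apply' measurableSet_Ioo]
      exact H
    rw [Real.volume_Ioo] at this
    exact absurd this (ENNReal.ofReal_pos.2 (sub_pos.2 huv)).ne'
  have hcob : IsCoboundedUnder (· ≥ ·) (ae μ) g := by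
    refine ⟨m + 1, fun x hx => ?_⟩
    obtain ⟨y, hy1, hy2⟩ := ((hfreq (m+1) (lt_add_one m)).and_eventually hx).exists
    exact le_trans hy2 hy1
  refine le_antisymm ?_ (le_liminf_of_le hcob (eventually_map.2 hae))
  refine le_of_forall_gt_imp_ge_of_dense fun c hc => ?_
  exact liminf_le_of_frequently_le (hfreq c hc) hbdd

lemma essInfA {x : ℝ} (hx : x ∈ Ioo (0:ℝ) 1) :
    essInf (fun y' => - Real.log |x - y'|) (volume.restrict (Ioo 1 2)) = - Real.log (2 - x) := by
  obtain ⟨hx0, hx1⟩ := hx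
  have h2x : (1:ℝ) < 2 - x := by linarith
  apply essInf_restrict_Ioo_eq 1 2 (by norm_num)
  · intro y hy
    obtain ⟨hy1, hy2⟩ := hy
    have habs : |x - y| = y - x := by rw [abs_sub_comm]; exact abs_of_pos (by linarith)
    rw [habs, neg_le_neg_iff]
    exact Real.log_le_log (by linarith) (by linarith)
  · intro c hc
    have hec : Real.exp (-c) < 2 - x := by
      have := Real.exp_lt_exp.2 (neg_lt_neg hc)
      rwa [neg_neg, Real.exp_log (by linarith)] at this
    refine ⟨max (x + Real.exp (-c)) (3/2), 2, ?_, ?_, le_refl _, ?_⟩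
    · exact le_trans (by norm_num) (le_max_right _ _)
    · apply max_lt (by linarith) (by norm_num)
    · intro y hy
      have hxy : x + Real.exp (-c) < y := lt_of_le_of_lt (le_max_left _ _) hy.1
      have habs : |x - y| = y - x := by
        rw [abs_sub_comm]; exact abs_of_pos (by have := Real.exp_pos (-c); linarith)
      rw [habs, neg_le, ← Real.log_exp (-c) ]
      exact Real.log_le_log (Real.exp_pos _) (by linarith)

lemma essInfB {y : ℝ} (hy : y ∈ Ioo (1:ℝ) 2) :
    essInf (fun x' => - Real.log |x' - y|) (volume.restrict (Ioo 0 1)) = - Real.log y := by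
  obtain ⟨hy1, hy2⟩ := hy
  apply essInf_restrict_Ioo_eq 0 1 (by norm_num)
  · intro x hx
    obtain ⟨hx0, hx1⟩ := hx
    have habs : |x - y| = y - x := by rw [abs_sub_comm]; exact abs_of_pos (by linarith)
    rw [habs, neg_le_neg_iff]
    exact Real.log_le_log (by linarith) (by linarith)
  · intro c hc
    have hec : Real.exp (-c) < y := by
      have := Real.exp_lt_exp.2 (neg_lt_neg hc)
      rwa [neg_neg, Real.exp_log (by linarith)] at this
    refine ⟨0, min (y - Real.exp (-c)) (1/2), le_refl _, ?_, ?_, ?_⟩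
    · apply lt_min (by linarith) (by norm_num)
    · exact le_trans (min_le_right _ _) (by norm_num)
    · intro x hx
      have hxy : x < y - Real.exp (-c) := lt_of_lt_of_le hx.2 (min_le_left _ _)
      have habs : |x - y| = y - x := by
        rw [abs_sub_comm]; exact abs_of_pos (by have := Real.exp_pos (-c); linarith)
      rw [habs, neg_le, ← Real.log_exp (-c)]
      exact Real.log_le_log (Real.exp_pos _) (by linarith)

/-- The value of the inner integral. -/
def Ffun (x : ℝ) : ℝ := (1-x) * Real.log (1-x) + x + x * Real.log (2-x)

lemma innerIntegral {x : ℝ} (hx : x ∈ Ioo (0:ℝ) 1) :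
    (∫ y in Ioo (1:ℝ) 2, (- Real.log (y - x) - max (- Real.log (2 - x)) (- Real.log y)))
      = Ffun x := by
  obtain ⟨hx0, hx1⟩ := hx
  have h1x : (0:ℝ) < 1 - x := by linarith
  have h2x : (1:ℝ) < 2 - x := by linarith
  have h2x2 : 2 - x < 2 := by linarith
  rw [← integral_Ioc_eq_integral_Ioo,
      ← intervalIntegral.integral_of_le (by norm_num : (1:ℝ) ≤ 2)]
  have hclog : ContinuousOn (fun y : ℝ => - Real.log (y - x)) (Icc 1 2) := by
    apply ContinuousOn.neg
    apply ContinuousOn.log (by fun_prop)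
    intro y hy
    have : 0 < y - x := by linarith [hy.1]
    exact this.ne'
  have hcmax : ContinuousOn (fun y : ℝ => max (- Real.log (2 - x)) (- Real.log y)) (Icc 1 2) := by
    apply ContinuousOn.sup continuousOn_const
    apply ContinuousOn.neg
    apply ContinuousOn.log (by fun_prop)
    intro y hy
    have : (0:ℝ) < y := by linarith [hy.1]
    exact this.ne'
  have hi1 : IntervalIntegrable (fun y : ℝ => - Real.log (y - x)) volume 1 2 :=
    (hclog.mono (by rw [uIcc_of_le (by norm_num : (1:ℝ) ≤ 2)])).intervalIntegrable
  have hi2 : IntervalIntegrable (fun y : ℝ => max (- Real.log (2 - x)) (- Real.log y)) volume 1 2 :=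
    (hcmax.mono (by rw [uIcc_of_le (by norm_num : (1:ℝ) ≤ 2)])).intervalIntegrable
  have hi2a : IntervalIntegrable (fun y : ℝ => max (- Real.log (2 - x)) (- Real.log y))
      volume 1 (2-x) :=
    (hcmax.mono (by rw [uIcc_of_le h2x.le]; exact Icc_subset_Icc le_rfl h2x2.le)).intervalIntegrable
  have hi2b : IntervalIntegrable (fun y : ℝ => max (- Real.log (2 - x)) (- Real.log y))
      volume (2-x) 2 :=
    (hcmax.mono (by rw [uIcc_of_le h2x2.le]; exact Icc_subset_Icc h2x.le le_rfl)).intervalIntegrable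
  rw [intervalIntegral.integral_sub hi1 hi2]
  have e1 : (∫ y in (1:ℝ)..2, - Real.log (y - x))
      = -((2-x) * Real.log (2-x) - (1-x) * Real.log (1-x) - (2-x) + (1-x)) := by
    rw [intervalIntegral.integral_neg]
    congr 1
    rw [intervalIntegral.integral_comp_sub_right (fun t => Real.log t) x]
    rw [integral_log]
  have hsplit : (∫ y in (1:ℝ)..2, max (- Real.log (2 - x)) (- Real.log y))
      = (∫ y in (1:ℝ)..(2-x), max (- Real.log (2 - x)) (- Real.log y))
        + ∫ y in (2-x)..2, max (- Real.log (2 - x)) (- Real.log y) :=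
    (intervalIntegral.integral_add_adjacent_intervals hi2a hi2b).symm
  have e2 : (∫ y in (1:ℝ)..(2-x), max (- Real.log (2 - x)) (- Real.log y))
      = -((2-x) * Real.log (2-x) - 1 * Real.log 1 - (2-x) + 1) := by
    rw [show (∫ y in (1:ℝ)..(2-x), max (- Real.log (2 - x)) (- Real.log y))
        = ∫ y in (1:ℝ)..(2-x), - Real.log y from
      intervalIntegral.integral_congr (fun y hy => ?_)]
    · rw [intervalIntegral.integral_neg, integral_log]
    · rw [uIcc_of_le h2x.le] at hy
      exact max_eq_right (neg_le_neg (Real.log_le_log (by linarith [hy.1]) hy.2))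
  have e3 : (∫ y in (2-x)..2, max (- Real.log (2 - x)) (- Real.log y))
      = x * (- Real.log (2-x)) := by
    rw [show (∫ y in (2-x)..(2:ℝ), max (- Real.log (2 - x)) (- Real.log y))
        = ∫ _ in (2-x)..(2:ℝ), - Real.log (2-x) from
      intervalIntegral.integral_congr (fun y hy => ?_)]
    · rw [intervalIntegral.integral_const]
      simp only [smul_eq_mul]
      ring
    · rw [uIcc_of_le h2x2.le] at hy
      exact max_eq_left (neg_le_neg (Real.log_le_log (by linarith) hy.1))
  rw [e1, hsplit, e2, e3, Ffun]
  rw [Real.log_one]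
  ring

lemma outerIntegral : (∫ x in Ioo (0:ℝ) 1, Ffun x) = 2 * Real.log 2 - 1 := by
  set G : ℝ → ℝ := fun x => (-(1 - x)/2) * ((1 - x) * Real.log (1 - x)) + (1 - x)^2/4
      + x^2/2 + x^2/2 * Real.log (2 - x) - x^2/4 - x - 2 * Real.log (2 - x) with hG
  have hcont : ContinuousOn G (Icc 0 1) := by
    apply ContinuousOn.sub
    apply ContinuousOn.sub
    apply ContinuousOn.sub
    apply ContinuousOn.add
    apply ContinuousOn.add
    apply ContinuousOn.add
    · exact (((continuous_const.sub continuous_id).neg.div_const 2).mul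
        (Real.continuous_mul_log.comp (continuous_const.sub continuous_id))).continuousOn
    · fun_prop
    · fun_prop
    · apply ContinuousOn.mul (by fun_prop)
      apply ContinuousOn.log (by fun_prop)
      intro y hy
      simp only [mem_Icc] at hy; intro h; linarith
    · fun_prop
    · fun_prop
    · apply ContinuousOn.mul continuousOn_const
      apply ContinuousOn.log (by fun_prop)
      intro y hy
      simp only [mem_Icc] at hy; intro h; linarith
  have hFcont : ContinuousOn Ffun (Icc 0 1) := by
    apply ContinuousOn.add
    apply ContinuousOn.add
    · exact (Real.continuous_mul_log.comp (continuous_const.sub continuous_id)).continuousOn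
    · fun_prop
    · apply ContinuousOn.mul (by fun_prop)
      apply ContinuousOn.log (by fun_prop)
      intro y hy
      simp only [mem_Icc] at hy; intro h; linarith
  have hint : IntervalIntegrable Ffun volume 0 1 :=
    (hFcont.mono (by rw [uIcc_of_le (by norm_num : (0:ℝ) ≤ 1)])).intervalIntegrable
  have hderiv : ∀ x ∈ Ioo (0:ℝ) 1, HasDerivWithinAt G (Ffun x) (Ioi x) x := by
    intro x hx
    obtain ⟨hx0, hx1⟩ := hx
    have h1x : (0:ℝ) < 1 - x := by linarith
    have h2x : (0:ℝ) < 2 - x := by linarith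
    have hd1 : HasDerivAt (fun y : ℝ => 1 - y) (-1) x := by
      simpa using (hasDerivAt_id x).const_sub 1
    have hd2 : HasDerivAt (fun y : ℝ => 2 - y) (-1) x := by
      simpa using (hasDerivAt_id x).const_sub 2
    have hl1 : HasDerivAt (fun y : ℝ => Real.log (1 - y)) (-1 / (1 - x)) x := hd1.log h1x.ne'
    have hl2 : HasDerivAt (fun y : ℝ => Real.log (2 - y)) (-1 / (2 - x)) x := hd2.log h2x.ne'
    have hm : HasDerivAt (fun y : ℝ => (1 - y) * Real.log (1 - y))
        ((-1) * Real.log (1 - x) + (1 - x) * (-1 / (1 - x))) x := hd1.mul hl1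
    have ht1 := ((hd1.neg.div_const 2).mul hm)
    have ht2 := (hd1.pow 2).div_const 4
    have ht3 := (hasDerivAt_pow 2 x).div_const 2
    have ht4 := ((hasDerivAt_pow 2 x).div_const 2).mul hl2
    have ht5 := (hasDerivAt_pow 2 x).div_const 4
    have ht6 := hasDerivAt_id x
    have ht7 := hl2.const_mul (2:ℝ)
    have H := (((((ht1.add ht2).add ht3).add ht4).sub ht5).sub ht6).sub ht7
    apply HasDerivAt.hasDerivWithinAt
    convert H using 1
    · ext y; simp only [hG, Pi.add_apply, Pi.sub_apply, Pi.mul_apply, Pi.neg_apply, Pi.pow_apply, id]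
    rw [Ffun]
    simp only [Pi.neg_apply]
    field_simp
    ring
  have key := intervalIntegral.integral_eq_sub_of_hasDeriv_right_of_le
    (by norm_num : (0:ℝ) ≤ 1) hcont hderiv hint
  rw [← integral_Ioc_eq_integral_Ioo, ← intervalIntegral.integral_of_le (by norm_num : (0:ℝ) ≤ 1),
    key, hG]
  norm_num [Real.log_one]
  ring

lemma osc_eq :
    recBloOsc (fun p => - Real.log |p.1 - p.2|) (Ioo 0 1) (Ioo 1 2) = 2 * Real.log 2 - 1 := by
  have inner_eq : ∀ x ∈ Ioo (0:ℝ) 1,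
      (⨍ y in Ioo (1:ℝ) 2,
        ((fun p : ℝ × ℝ => - Real.log |p.1 - p.2|) (x, y)
          - max (essInf (fun y' => (fun p : ℝ × ℝ => - Real.log |p.1 - p.2|) (x, y'))
              (volume.restrict (Ioo 1 2)))
            (essInf (fun x' => (fun p : ℝ × ℝ => - Real.log |p.1 - p.2|) (x', y))
              (volume.restrict (Ioo 0 1))))) = Ffun x := by
    intro x hx
    simp only
    rw [essInfA hx, setAverage_eq, Real.volume_real_Ioo,
      show (max ((2:ℝ)-1) 0)⁻¹ = 1 by norm_num, one_smul]
    rw [show (∫ y in Ioo (1:ℝ) 2,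
          (- Real.log |x - y| - max (- Real.log (2 - x))
            (essInf (fun x' => - Real.log |x' - y|) (volume.restrict (Ioo 0 1)))))
        = ∫ y in Ioo (1:ℝ) 2,
            (- Real.log (y - x) - max (- Real.log (2 - x)) (- Real.log y)) from
      setIntegral_congr_fun measurableSet_Ioo fun y hy => ?_]
    · exact innerIntegral hx
    · obtain ⟨hx0, hx1⟩ := hx
      have habs : |x - y| = y - x := by
        rw [abs_sub_comm]; exact abs_of_pos (by linarith [hy.1])
      rw [essInfB hy, habs]
  rw [recBloOsc, setAverage_eq,
    setIntegral_congr_fun measurableSet_Ioo inner_eq, outerIntegral, Real.volume_real_Ioo]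
  norm_num

end NegLogBloAux

/-- For `f(x,y) = −log|x − y|` on `ℝ×ℝ` and the basis `ℛ` of axis-parallel
rectangles, `‖f‖_{BLO_{rec,ℛ}} ≥ 2 log 2 − 1`; in fact the defining average over the
rectangle `(0,1)×(1,2)` is at least `2 log 2 − 1`. -/
theorem neg_log_abs_rec_blo_lower_bound :
    2 * Real.log 2 - 1 ≤
      recBloOsc (fun p => - Real.log |p.1 - p.2|) (Ioo 0 1) (Ioo 1 2) ∧
    ENNReal.ofReal (2 * Real.log 2 - 1) ≤
      recBloNorm (fun p => - Real.log |p.1 - p.2|) := by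
  have h1 : 2 * Real.log 2 - 1 ≤
      recBloOsc (fun p => - Real.log |p.1 - p.2|) (Ioo 0 1) (Ioo 1 2) :=
    le_of_eq NegLogBloAux.osc_eq.symm
  refine ⟨h1, ?_⟩
  have hI : Ioo (0:ℝ) 1 ∈ intervalBasis := ⟨0, 1, by norm_num, rfl⟩
  have hJ : Ioo (1:ℝ) 2 ∈ intervalBasis := ⟨1, 2, by norm_num, rfl⟩
  calc ENNReal.ofReal (2 * Real.log 2 - 1)
      ≤ ENNReal.ofReal (recBloOsc (fun p => - Real.log |p.1 - p.2|) (Ioo 0 1) (Ioo 1 2)) :=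
        ENNReal.ofReal_le_ofReal h1
    _ ≤ ⨆ J ∈ intervalBasis,
          ENNReal.ofReal (recBloOsc (fun p => - Real.log |p.1 - p.2|) (Ioo 0 1) J) :=
        le_biSup (f := fun J => ENNReal.ofReal
          (recBloOsc (fun p => - Real.log |p.1 - p.2|) (Ioo 0 1) J)) hJ
    _ ≤ recBloNorm (fun p => - Real.log |p.1 - p.2|) :=
        le_biSup (fun I => ⨆ J ∈ intervalBasis,
          ENNReal.ofReal (recBloOsc (fun p => - Real.log |p.1 - p.2|) I J)) hI
end
end
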